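/- Let p be an odd prime, l ≥ 1, and n a natural number. The monomial dynamical system ψ_n(x) = x^n on the sphere S_{p^{-l}}(1) = {x ∈ Q_p : |x - 1|_p = p^{-l}} is minimal (every forward orbit {x^{n^N} : N ∈ ℕ} is dense in the sphere) if and only if n is a generator of the multiplicative group (Z/p^2 Z)^*. -/

import Mathlib

open Subgroup

variable {p : ℕ}

lemma lte_aux (hp : p.Prime) (hp2 : p ≠ 2) {l : ℕ} (hl : 1 ≤ l) {a : ℤ}
    (h1 : (p : ℤ) ^ l ∣ a - 1) (h2 : ¬ (p : ℤ) ^ (l + 1) ∣ a - 1) (t : ℕ) :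
    emultiplicity (p : ℤ) (a ^ t - 1) = l + emultiplicity p t := by
  have hodd : Odd p := hp.odd_of_ne_two hp2
  have hpa1 : (p : ℤ) ∣ a - 1 := dvd_trans (dvd_pow_self (p : ℤ) (by omega)) h1
  have hna : ¬ (p : ℤ) ∣ a := by
    intro h
    have h1' : (p : ℤ) ∣ 1 := by simpa using dvd_sub h hpa1
    have := Int.le_of_dvd one_pos h1'
    have := hp.two_le
    omega
  have key : emultiplicity (p : ℤ) (a - 1) = l := emultiplicity_eq_coe.mpr ⟨h1, h2⟩
  calc emultiplicity (p : ℤ) (a ^ t - 1)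
      = emultiplicity (p : ℤ) (a ^ t - 1 ^ t) := by rw [one_pow]
    _ = emultiplicity (p : ℤ) (a - 1) + emultiplicity p t :=
        Int.emultiplicity_pow_sub_pow hp hodd hpa1 hna t
    _ = l + emultiplicity p t := by rw [key]

lemma coprime_of_dvd (hp : p.Prime) {l : ℕ} (hl : 1 ≤ l) {a : ℕ}
    (h1 : (p : ℤ) ^ l ∣ (a : ℤ) - 1) (k : ℕ) : Nat.Coprime a (p ^ k) := by
  have hpa1 : (p : ℤ) ∣ (a : ℤ) - 1 := dvd_trans (dvd_pow_self (p : ℤ) (by omega)) h1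
  have hna : ¬ p ∣ a := by
    intro h
    have h' : (p : ℤ) ∣ (a : ℤ) := Int.natCast_dvd_natCast.mpr h
    have h1' : (p : ℤ) ∣ 1 := by simpa using dvd_sub h' hpa1
    have := Int.le_of_dvd one_pos h1'
    have := hp.two_le
    omega
  exact Nat.Coprime.pow_right k ((hp.coprime_iff_not_dvd.mpr hna).symm)

lemma unit_pow_one_iff {a m : ℕ} [NeZero m] (hco : a.Coprime m) (t : ℕ) :
    (ZMod.unitOfCoprime a hco) ^ t = 1 ↔ (m : ℤ) ∣ (a : ℤ) ^ t - 1 := by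
  rw [Units.ext_iff, Units.val_pow_eq_pow_val, ZMod.coe_unitOfCoprime, Units.val_one,
    show ((a : ZMod m)) ^ t = ((a ^ t : ℕ) : ZMod m) by push_cast; ring,
    show (1 : ZMod m) = ((1 : ℕ) : ZMod m) by norm_cast,
    ZMod.natCast_eq_natCast_iff, Nat.modEq_iff_dvd]
  constructor
  · intro h; have := dvd_sub_comm.mp h; exact_mod_cast this
  · intro h; apply dvd_sub_comm.mp; exact_mod_cast h

lemma orderOf_unitOfCoprime (hp : p.Prime) (hp2 : p ≠ 2) {l k a : ℕ} (hl : 1 ≤ l)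
    (hk : l + 1 ≤ k) (h1 : (p : ℤ) ^ l ∣ (a : ℤ) - 1) (h2 : ¬ (p : ℤ) ^ (l + 1) ∣ (a : ℤ) - 1)
    [NeZero (p ^ k)] (hco : Nat.Coprime a (p ^ k)) :
    orderOf (ZMod.unitOfCoprime a hco) = p ^ (k - l) := by
  have hmain := fun t => lte_aux hp hp2 hl h1 h2 t
  have hcast : ∀ t : ℕ, ((p ^ k : ℕ) : ℤ) ∣ (a : ℤ) ^ t - 1 ↔ (p : ℤ) ^ k ∣ (a : ℤ) ^ t - 1 := by
    intro t; push_cast; rfl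
  have hdvd : (ZMod.unitOfCoprime a hco) ^ (p ^ (k - l)) = 1 := by
    rw [unit_pow_one_iff, hcast]
    apply pow_dvd_of_le_emultiplicity
    rw [hmain, emultiplicity_pow_self_of_prime hp.prime]
    exact_mod_cast le_of_eq (by omega : k = l + (k - l))
  have horder : orderOf (ZMod.unitOfCoprime a hco) ∣ p ^ (k - l) :=
    orderOf_dvd_of_pow_eq_one hdvd
  obtain ⟨j, hj, hord⟩ := (Nat.dvd_prime_pow hp).mp horder
  rcases eq_or_lt_of_le hj with rfl | hjlt
  · exact hord
  · exfalso
    have h1' : (ZMod.unitOfCoprime a hco) ^ (p ^ j) = 1 := by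
      rw [← hord]; exact pow_orderOf_eq_one _
    rw [unit_pow_one_iff, hcast, pow_dvd_iff_le_emultiplicity, hmain,
      emultiplicity_pow_self_of_prime hp.prime] at h1'
    have : k ≤ l + j := by exact_mod_cast h1'
    omega
open Subgroup
variable {p : ℕ}

lemma genAll (hp : p.Prime) (hp2 : p ≠ 2) {n : ℕ}
    (HG : ∀ y : ZMod (p ^ 2), IsUnit y → ∃ N : ℕ, (n : ZMod (p ^ 2)) ^ N = y)
    {m : ℕ} (hm : 1 ≤ m) {e : ℕ} (he : ¬ p ∣ e) : ∃ N, n ^ N ≡ e [MOD p ^ m] := by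
  haveI : Fact p.Prime := ⟨hp⟩
  have hp3 : 2 < p := by have := hp.two_le; omega
  haveI : Fact (2 < p ^ 2) := ⟨by nlinarith [hp.two_le]⟩
  haveI : NeZero (p ^ 2) := ⟨pow_ne_zero _ hp.pos.ne'⟩
  haveI : NeZero (p ^ m) := ⟨pow_ne_zero _ hp.pos.ne'⟩
  -- p does not divide n
  obtain ⟨N₀, hN₀⟩ := HG (-1) isUnit_one.neg
  have hpn : ¬ p ∣ n := by
    intro hdvd
    rcases Nat.eq_zero_or_pos N₀ with rfl | hpos
    · rw [pow_zero] at hN₀; exact ZMod.neg_one_ne_one hN₀.symm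
    · have h1 : IsUnit ((n : ZMod (p ^ 2)) ^ N₀) := hN₀ ▸ isUnit_one.neg
      have h2 : IsUnit (n : ZMod (p ^ 2)) := (isUnit_pow_iff (by omega)).mp h1
      have h3 := (ZMod.isUnit_iff_coprime n (p ^ 2)).mp h2
      have : p ∣ Nat.gcd n (p ^ 2) := Nat.dvd_gcd hdvd (dvd_pow_self p two_ne_zero)
      rw [h3] at this
      have := Nat.le_of_dvd one_pos this
      omega
  have hco_n : ∀ k : ℕ, Nat.Coprime n (p ^ k) :=
    fun k => Nat.Coprime.pow_right k ((hp.coprime_iff_not_dvd.mpr hpn).symm)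
  set U := ZMod.unitOfCoprime n (hco_n 2) with hUdef
  have hU : ∀ x : (ZMod (p ^ 2))ˣ, x ∈ zpowers U := by
    intro x
    obtain ⟨N, hN⟩ := HG x x.isUnit
    rw [Subgroup.mem_zpowers_iff]
    refine ⟨(N : ℤ), ?_⟩
    rw [zpow_natCast]
    apply Units.ext
    rw [Units.val_pow_eq_pow_val, hUdef, ZMod.coe_unitOfCoprime]
    exact hN
  have hUord : orderOf U = p * (p - 1) := by
    rw [orderOf_eq_card_of_forall_mem_zpowers hU, Nat.card_eq_fintype_card,
      ZMod.card_units_eq_totient, Nat.totient_prime_pow hp (by norm_num)]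
    norm_num
  -- Fermat facts
  have hfe1 : (p : ℤ) ∣ (n : ℤ) ^ (p - 1) - 1 := by
    have hne : (n : ZMod p) ≠ 0 := by
      rw [Ne, ZMod.natCast_eq_zero_iff]; exact hpn
    have h := ZMod.pow_card_sub_one_eq_one hne
    have h2 : ((n ^ (p - 1) : ℕ) : ZMod p) = ((1 : ℕ) : ZMod p) := by push_cast; simpa using h
    rw [ZMod.natCast_eq_natCast_iff, Nat.modEq_iff_dvd] at h2
    have h3 := dvd_sub_comm.mp h2
    exact_mod_cast h3
  have hfe2 : ¬ (p : ℤ) ^ 2 ∣ (n : ℤ) ^ (p - 1) - 1 := by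
    intro hdvd
    have hU1 : U ^ (p - 1) = 1 := by
      rw [unit_pow_one_iff]
      push_cast
      exact hdvd
    have hord := orderOf_dvd_of_pow_eq_one hU1
    rw [hUord] at hord
    have hle := Nat.le_of_dvd (by omega) hord
    have h2le := Nat.mul_le_mul_right (p - 1) hp.two_le
    omega
  -- order of n mod p is p - 1
  set V : (ZMod p)ˣ := ZMod.unitOfCoprime n ((hp.coprime_iff_not_dvd.mpr hpn).symm) with hVdef
  have hVord : orderOf V = p - 1 := by
    have hV : ∀ x : (ZMod p)ˣ, x ∈ zpowers V := by
      intro x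
      obtain ⟨x', hx'⟩ := ZMod.unitsMap_surjective
        (show p ∣ p ^ 2 from dvd_pow_self p two_ne_zero) x
      obtain ⟨N, hN⟩ := HG x' x'.isUnit
      rw [Subgroup.mem_zpowers_iff]
      refine ⟨(N : ℤ), ?_⟩
      rw [zpow_natCast]
      apply Units.ext
      rw [Units.val_pow_eq_pow_val, hVdef, ZMod.coe_unitOfCoprime]
      rw [← hx', ZMod.unitsMap_def, Units.coe_map]
      show (n : ZMod p) ^ N = (ZMod.castHom (dvd_pow_self p two_ne_zero) (ZMod p)) (x' : ZMod (p ^ 2))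
      rw [← hN, map_pow, map_natCast]
    rw [orderOf_eq_card_of_forall_mem_zpowers hV, Nat.card_eq_fintype_card, ZMod.card_units]
  -- order of n mod p^m
  set W := ZMod.unitOfCoprime n (hco_n m) with hWdef
  have hWcard : orderOf W ∣ p ^ (m - 1) * (p - 1) := by
    have h := orderOf_dvd_card (x := W)
    rwa [ZMod.card_units_eq_totient, Nat.totient_prime_pow hp (by omega)] at h
  set t := orderOf W with htdef
  have htpos : 0 < t := orderOf_pos W
  have hWt : W ^ t = 1 := pow_orderOf_eq_one W
  have hp1t : (p - 1) ∣ t := by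
    have hmap : ZMod.unitsMap (dvd_pow_self p (by omega : m ≠ 0)) W = V := by
      apply Units.ext
      rw [ZMod.unitsMap_def, Units.coe_map, hVdef, ZMod.coe_unitOfCoprime]
      show (ZMod.castHom (dvd_pow_self p (by omega : m ≠ 0)) (ZMod p)) (W : ZMod (p ^ m)) = (n : ZMod p)
      rw [hWdef, ZMod.coe_unitOfCoprime, map_natCast]
    have h1 : V ^ t = 1 := by rw [← hmap, ← map_pow, hWt, map_one]
    have := orderOf_dvd_of_pow_eq_one h1
    rwa [hVord] at this
  have hpt : p ^ (m - 1) ∣ t := by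
    obtain ⟨s, hs⟩ := hp1t
    have hWt' : ((p ^ m : ℕ) : ℤ) ∣ (n : ℤ) ^ t - 1 := (unit_pow_one_iff _ _).mp hWt
    have hWt'' : (p : ℤ) ^ m ∣ ((n : ℤ) ^ (p - 1)) ^ s - 1 := by
      rw [← pow_mul, ← hs]; exact_mod_cast hWt'
    have hl := lte_aux hp hp2 (le_refl 1) (by rw [pow_one]; exact hfe1)
      (by rw [show (1:ℕ)+1 = 2 from rfl]; exact hfe2) s
    rw [pow_dvd_iff_le_emultiplicity, hl] at hWt''
    have hm1 : ((m - 1 : ℕ) : ℕ∞) ≤ emultiplicity p s := by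
      cases hc : emultiplicity p s with
      | top => exact le_top
      | coe c =>
        rw [hc] at hWt''
        have : m ≤ 1 + c := by exact_mod_cast hWt''
        exact_mod_cast (by omega : m - 1 ≤ c)
    have : p ^ (m - 1) ∣ s := pow_dvd_of_le_emultiplicity hm1
    exact hs ▸ Dvd.dvd.mul_left this (p - 1)
  have hcop : Nat.Coprime (p ^ (m - 1)) (p - 1) := by
    apply Nat.Coprime.pow_left
    have h : Nat.Coprime (p - 1 + 1) (p - 1) := by simp
    rwa [Nat.sub_add_cancel hp.pos] at h
  have hWord : orderOf W = p ^ (m - 1) * (p - 1) :=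
    Nat.dvd_antisymm hWcard (hcop.mul_dvd_of_dvd_of_dvd hpt hp1t)
  have htop : zpowers W = ⊤ := by
    refine (Subgroup.card_eq_iff_eq_top _).mp ?_
    rw [Nat.card_zpowers, hWord, Nat.card_eq_fintype_card, ZMod.card_units_eq_totient,
      Nat.totient_prime_pow hp (by omega)]
  have hEco : Nat.Coprime e (p ^ m) := Nat.Coprime.pow_right _ ((hp.coprime_iff_not_dvd.mpr he).symm)
  have hmem : ZMod.unitOfCoprime e hEco ∈ zpowers W := htop ▸ Subgroup.mem_top _
  rw [← mem_powers_iff_mem_zpowers] at hmem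
  obtain ⟨N, hN⟩ := hmem
  refine ⟨N, ?_⟩
  have hcast : ((n ^ N : ℕ) : ZMod (p ^ m)) = ((e : ℕ) : ZMod (p ^ m)) := by
    have h := congrArg Units.val hN
    rw [Units.val_pow_eq_pow_val, hWdef, ZMod.coe_unitOfCoprime, ZMod.coe_unitOfCoprime] at h
    push_cast
    exact h
  exact (ZMod.natCast_eq_natCast_iff _ _ _).mp hcast
lemma core (hp : p.Prime) (hp2 : p ≠ 2) {l k n : ℕ} (hl : 1 ≤ l) (hk : l + 1 ≤ k) {a b : ℕ}
    (ha1 : (p : ℤ) ^ l ∣ (a : ℤ) - 1) (ha2 : ¬ (p : ℤ) ^ (l + 1) ∣ (a : ℤ) - 1)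
    (hb1 : (p : ℤ) ^ l ∣ (b : ℤ) - 1) (hb2 : ¬ (p : ℤ) ^ (l + 1) ∣ (b : ℤ) - 1)
    (Hgen : ∀ e : ℕ, ¬ p ∣ e → ∃ N, n ^ N ≡ e [MOD p ^ (k - l)]) :
    ∃ N, (p : ℤ) ^ k ∣ (a : ℤ) ^ (n ^ N) - (b : ℤ) := by
  haveI : NeZero (p ^ k) := ⟨pow_ne_zero _ hp.pos.ne'⟩
  haveI : NeZero (p ^ l) := ⟨pow_ne_zero _ hp.pos.ne'⟩
  set A := ZMod.unitOfCoprime a (coprime_of_dvd hp hl ha1 k) with hAdef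
  set B := ZMod.unitOfCoprime b (coprime_of_dvd hp hl hb1 k) with hBdef
  have hAord : orderOf A = p ^ (k - l) := orderOf_unitOfCoprime hp hp2 hl hk ha1 ha2 _
  have hBord : orderOf B = p ^ (k - l) := orderOf_unitOfCoprime hp hp2 hl hk hb1 hb2 _
  have hdl : p ^ l ∣ p ^ k := pow_dvd_pow p (by omega)
  set f := ZMod.unitsMap hdl with hfdef
  have hker : ∀ (c : ℕ) (hc : Nat.Coprime c (p ^ k)), (p : ℤ) ^ l ∣ (c : ℤ) - 1 →
      ZMod.unitOfCoprime c hc ∈ MonoidHom.ker f := by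
    intro c hc hdvd
    rw [MonoidHom.mem_ker]
    apply Units.ext
    rw [hfdef, ZMod.unitsMap_def, Units.coe_map, Units.val_one]
    show (ZMod.castHom hdl (ZMod (p ^ l))) ((ZMod.unitOfCoprime c hc : ZMod (p ^ k))) = 1
    rw [ZMod.coe_unitOfCoprime, map_natCast]
    have h : ((c : ℤ) : ZMod (p ^ l)) = ((1 : ℤ) : ZMod (p ^ l)) := by
      rw [ZMod.intCast_eq_intCast_iff]
      have h' : ((p ^ l : ℕ) : ℤ) ∣ (1 : ℤ) - (c : ℤ) := by
        have : ((p ^ l : ℕ) : ℤ) ∣ (c : ℤ) - 1 := by exact_mod_cast hdvd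
        exact dvd_sub_comm.mp this
      exact Int.modEq_iff_dvd.mpr h'
    simpa using h
  have hAK : A ∈ MonoidHom.ker f := hker a _ ha1
  have hBK : B ∈ MonoidHom.ker f := hker b _ hb1
  have hcardK : Nat.card (MonoidHom.ker f) = p ^ (k - l) := by
    have hsurj := ZMod.unitsMap_surjective hdl
    have hq := Nat.card_congr (QuotientGroup.quotientKerEquivOfSurjective f hsurj).toEquiv
    have hG := Subgroup.card_eq_card_quotient_mul_card_subgroup (MonoidHom.ker f)
    rw [hq] at hG
    have e1 : Nat.card (ZMod (p ^ k))ˣ = p ^ (k - 1) * (p - 1) := by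
      rw [Nat.card_eq_fintype_card, ZMod.card_units_eq_totient,
        Nat.totient_prime_pow hp (by omega)]
    have e2 : Nat.card (ZMod (p ^ l))ˣ = p ^ (l - 1) * (p - 1) := by
      rw [Nat.card_eq_fintype_card, ZMod.card_units_eq_totient,
        Nat.totient_prime_pow hp (by omega)]
    rw [e1, e2] at hG
    have hpow : p ^ (l - 1) * (p - 1) * p ^ (k - l) = p ^ (k - 1) * (p - 1) := by
      rw [mul_comm (p ^ (l - 1)) (p - 1), mul_assoc, ← pow_add,
        show l - 1 + (k - l) = k - 1 by omega, mul_comm]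
    have hpos : 0 < p ^ (l - 1) * (p - 1) := by
      have := hp.two_le
      exact Nat.mul_pos (pow_pos hp.pos _) (by omega)
    exact Nat.eq_of_mul_eq_mul_left hpos (by rw [← hG, hpow])
  have hBzp : B ∈ Subgroup.zpowers A := by
    have h1 : Subgroup.zpowers A ≤ MonoidHom.ker f := Subgroup.zpowers_le.mpr hAK
    have hcards : Nat.card (Subgroup.zpowers A) = Nat.card (MonoidHom.ker f) := by
      rw [Nat.card_zpowers, hAord, hcardK]
    have hset : (Subgroup.zpowers A : Set (ZMod (p ^ k))ˣ) = (MonoidHom.ker f : Set (ZMod (p ^ k))ˣ) := by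
      apply Set.eq_of_subset_of_ncard_le h1
      rw [← Nat.card_coe_set_eq, ← Nat.card_coe_set_eq]
      exact le_of_eq hcards.symm
    have : Subgroup.zpowers A = MonoidHom.ker f := SetLike.ext' hset
    rw [this]
    exact hBK
  rw [← mem_powers_iff_mem_zpowers, Submonoid.mem_powers_iff] at hBzp
  obtain ⟨e, hE⟩ := hBzp
  have hpe : ¬ p ∣ e := by
    have hop := orderOf_pow (n := e) A
    rw [hE, hBord, hAord] at hop
    have hdvdg : Nat.gcd (p ^ (k - l)) e ∣ p ^ (k - l) := Nat.gcd_dvd_left _ _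
    have hpos : 0 < p ^ (k - l) := pow_pos hp.pos _
    have hg1 : Nat.gcd (p ^ (k - l)) e = 1 := by
      rcases Nat.div_eq_self.mp hop.symm with h0 | h1
      · exact absurd h0 hpos.ne'
      · exact h1
    intro hpe'
    have hpd : p ∣ Nat.gcd (p ^ (k - l)) e :=
      Nat.dvd_gcd (dvd_pow_self p (by omega)) hpe'
    rw [hg1] at hpd
    have := Nat.le_of_dvd one_pos hpd
    have := hp.two_le
    omega
  obtain ⟨N, hN⟩ := Hgen e hpe
  refine ⟨N, ?_⟩
  have hpow : A ^ (n ^ N) = A ^ e := by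
    rw [pow_eq_pow_iff_modEq, hAord]
    exact hN
  have hAB : A ^ (n ^ N) = B := hpow.trans hE
  have hcoe := congrArg Units.val hAB
  rw [Units.val_pow_eq_pow_val, hAdef, hBdef, ZMod.coe_unitOfCoprime, ZMod.coe_unitOfCoprime]
    at hcoe
  have h2 : (((a : ℤ) ^ (n ^ N) - (b : ℤ) : ℤ) : ZMod (p ^ k)) = 0 := by
    push_cast
    rw [hcoe]
    ring
  rw [ZMod.intCast_zmod_eq_zero_iff_dvd] at h2
  exact_mod_cast h2
lemma norm_int_eq [hpf : Fact p.Prime] {l : ℕ} {m : ℤ}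
    (h1 : (p : ℤ) ^ l ∣ m) (h2 : ¬ (p : ℤ) ^ (l + 1) ∣ m) :
    ‖(m : ℚ_[p])‖ = (p : ℝ) ^ (-(l : ℤ)) := by
  have hm0 : m ≠ 0 := by rintro rfl; exact h2 (dvd_zero _)
  have hm0' : (m : ℚ_[p]) ≠ 0 := Int.cast_ne_zero.mpr hm0
  have hp1 : (1 : ℝ) < p := by exact_mod_cast hpf.out.one_lt
  have hle : ‖(m : ℚ_[p])‖ ≤ (p : ℝ) ^ (-(l : ℤ)) := by
    have := (Padic.norm_int_le_pow_iff_dvd m l).mpr (by exact_mod_cast h1)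
    exact_mod_cast this
  have hnle : ¬ ‖(m : ℚ_[p])‖ ≤ (p : ℝ) ^ (-((l + 1 : ℕ) : ℤ)) :=
    fun h => h2 (by exact_mod_cast (Padic.norm_int_le_pow_iff_dvd m (l + 1)).mp h)
  rw [Padic.norm_eq_zpow_neg_valuation hm0'] at hle hnle ⊢
  have h1' : -(m : ℚ_[p]).valuation ≤ -(l : ℤ) := (zpow_le_zpow_iff_right₀ hp1).mp hle
  have h2' : ¬ (-(m : ℚ_[p]).valuation ≤ -((l + 1 : ℕ) : ℤ)) :=
    fun h => hnle ((zpow_le_zpow_iff_right₀ hp1).mpr h)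
  congr 1
  push_cast at h2'
  omega

theorem stmt_13 (p : ℕ) [Fact p.Prime] (hp : p ≠ 2) (l : ℕ) (hl : 1 ≤ l) (n : ℕ) :
    (∀ x y : ℚ_[p], ‖x - 1‖ = (p : ℝ) ^ (-(l : ℤ)) → ‖y - 1‖ = (p : ℝ) ^ (-(l : ℤ)) →
        ∀ ε : ℝ, 0 < ε → ∃ N : ℕ, ‖x ^ (n ^ N) - y‖ < ε)
      ↔ (∀ y : ZMod (p ^ 2), IsUnit y → ∃ N : ℕ, (n : ZMod (p ^ 2)) ^ N = y) := by
  have hpp : p.Prime := Fact.out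
  have hp1R : (1 : ℝ) < p := by exact_mod_cast hpp.one_lt
  haveI : NeZero (p ^ 2) := ⟨pow_ne_zero _ hpp.pos.ne'⟩
  constructor
  · intro Hmin y hy
    set a₀ : ℕ := 1 + p ^ l with ha₀
    have ha₀cast : ((a₀ : ℤ)) - 1 = (p : ℤ) ^ l := by rw [ha₀]; push_cast; ring
    have ha1 : (p : ℤ) ^ l ∣ (a₀ : ℤ) - 1 := by rw [ha₀cast]
    have ha2 : ¬ (p : ℤ) ^ (l + 1) ∣ (a₀ : ℤ) - 1 := by
      rw [ha₀cast]
      intro h'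
      have h'' : (p ^ (l + 1) : ℕ) ∣ p ^ l := by exact_mod_cast h'
      have := Nat.le_of_dvd (pow_pos hpp.pos _) h''
      have := Nat.pow_lt_pow_right hpp.one_lt (show l < l + 1 by omega)
      omega
    set e : ℕ := y.val with he_def
    have hyco : Nat.Coprime e (p ^ 2) := by
      have hy' : IsUnit ((e : ℕ) : ZMod (p ^ 2)) := by
        rwa [he_def, ZMod.natCast_val, ZMod.cast_id]
      exact (ZMod.isUnit_iff_coprime e (p ^ 2)).mp hy'
    have hpe : ¬ p ∣ e := by
      intro h
      have hd : p ∣ Nat.gcd e (p ^ 2) := Nat.dvd_gcd h (dvd_pow_self p two_ne_zero)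
      rw [hyco] at hd
      have := Nat.le_of_dvd one_pos hd
      have := hpp.two_le
      omega
    have hxnorm : ‖((a₀ : ℚ_[p])) - 1‖ = (p : ℝ) ^ (-(l : ℤ)) := by
      have hcast : ((a₀ : ℚ_[p])) - 1 = (((a₀ : ℤ) - 1 : ℤ) : ℚ_[p]) := by push_cast; ring
      rw [hcast]
      exact norm_int_eq ha1 ha2
    have hemult := lte_aux hpp hp hl ha1 ha2 e
    have he0 : emultiplicity p e = 0 := emultiplicity_eq_zero.mpr hpe
    have h1e : (p : ℤ) ^ l ∣ (a₀ : ℤ) ^ e - 1 :=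
      pow_dvd_of_le_emultiplicity (by rw [hemult, he0, add_zero])
    have h2e : ¬ (p : ℤ) ^ (l + 1) ∣ (a₀ : ℤ) ^ e - 1 := by
      rw [pow_dvd_iff_le_emultiplicity, hemult, he0, add_zero]
      intro h
      have : l + 1 ≤ l := by exact_mod_cast h
      omega
    have hynorm : ‖((a₀ : ℚ_[p])) ^ e - 1‖ = (p : ℝ) ^ (-(l : ℤ)) := by
      have hcast : ((a₀ : ℚ_[p])) ^ e - 1 = (((a₀ : ℤ) ^ e - 1 : ℤ) : ℚ_[p]) := by push_cast; ring
      rw [hcast]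
      exact norm_int_eq h1e h2e
    have hεpos : (0 : ℝ) < (p : ℝ) ^ (-((l + 2 : ℕ) : ℤ)) :=
      zpow_pos (by exact_mod_cast hpp.pos) _
    obtain ⟨N, hN⟩ := Hmin (a₀ : ℚ_[p]) ((a₀ : ℚ_[p]) ^ e) hxnorm hynorm _ hεpos
    have hdvd : (p : ℤ) ^ (l + 2) ∣ (a₀ : ℤ) ^ (n ^ N) - (a₀ : ℤ) ^ e := by
      have hcast : ((a₀ : ℚ_[p])) ^ (n ^ N) - (a₀ : ℚ_[p]) ^ e
          = (((a₀ : ℤ) ^ (n ^ N) - (a₀ : ℤ) ^ e : ℤ) : ℚ_[p]) := by push_cast; ring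
      have hle := le_of_lt hN
      rw [hcast] at hle
      have := (Padic.norm_int_le_pow_iff_dvd _ (l + 2)).mp (by exact_mod_cast hle)
      exact_mod_cast this
    haveI : NeZero (p ^ (l + 2)) := ⟨pow_ne_zero _ hpp.pos.ne'⟩
    have hco := coprime_of_dvd hpp hl ha1 (l + 2)
    have hord := orderOf_unitOfCoprime hpp hp hl (by omega) ha1 ha2 hco
    have hAB : (ZMod.unitOfCoprime a₀ hco) ^ (n ^ N) = (ZMod.unitOfCoprime a₀ hco) ^ e := by
      apply Units.ext
      rw [Units.val_pow_eq_pow_val, Units.val_pow_eq_pow_val, ZMod.coe_unitOfCoprime]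
      have h0 : (((a₀ : ℤ) ^ (n ^ N) - (a₀ : ℤ) ^ e : ℤ) : ZMod (p ^ (l + 2))) = 0 := by
        rw [ZMod.intCast_zmod_eq_zero_iff_dvd]
        exact_mod_cast hdvd
      push_cast at h0
      exact sub_eq_zero.mp h0
    rw [pow_eq_pow_iff_modEq, hord, show l + 2 - l = 2 by omega] at hAB
    refine ⟨N, ?_⟩
    have hcast := (ZMod.natCast_eq_natCast_iff _ _ _).mpr hAB
    calc (n : ZMod (p ^ 2)) ^ N = ((n ^ N : ℕ) : ZMod (p ^ 2)) := by push_cast; ring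
      _ = ((e : ℕ) : ZMod (p ^ 2)) := hcast
      _ = y := by rw [he_def, ZMod.natCast_val, ZMod.cast_id]
  · intro HG x y hx hy ε hε
    obtain ⟨k₀, hk₀⟩ : ∃ k₀ : ℕ, (p : ℝ) ^ (-(k₀ : ℤ)) < ε := by
      obtain ⟨k₀, hk₀⟩ := exists_pow_lt_of_lt_one hε
        (show (p : ℝ)⁻¹ < 1 from inv_lt_one_of_one_lt₀ hp1R)
      refine ⟨k₀, ?_⟩
      rwa [zpow_neg, ← inv_zpow, zpow_natCast]
    set k := max k₀ (l + 1) with hkdef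
    have hkl : l + 1 ≤ k := le_max_right _ _
    have hkε : (p : ℝ) ^ (-(k : ℤ)) < ε := by
      refine lt_of_le_of_lt ?_ hk₀
      apply zpow_le_zpow_right₀ (le_of_lt hp1R)
      have : k₀ ≤ k := le_max_left _ _
      omega
    have hnormsmall : (p : ℝ) ^ (-(l : ℤ)) ≤ 1 := by
      have h := zpow_le_zpow_right₀ (le_of_lt hp1R) (show -(l : ℤ) ≤ 0 by omega)
      simpa using h
    have hxle : ‖x‖ ≤ 1 := by
      have hxeq : x = (x - 1) + 1 := by ring
      rw [hxeq]
      refine le_trans (Padic.nonarchimedean _ _) (max_le ?_ ?_)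
      · rw [hx]; exact hnormsmall
      · simp
    have hyle : ‖y‖ ≤ 1 := by
      have hyeq : y = (y - 1) + 1 := by ring
      rw [hyeq]
      refine le_trans (Padic.nonarchimedean _ _) (max_le ?_ ?_)
      · rw [hy]; exact hnormsmall
      · simp
    set z : ℤ_[p] := ⟨x, hxle⟩ with hzdef
    set w : ℤ_[p] := ⟨y, hyle⟩ with hwdef
    set a : ℕ := z.appr k with hadef
    set b : ℕ := w.appr k with hbdef
    have happr : ∀ u : ℤ_[p], ‖(u : ℚ_[p]) - ((u.appr k : ℕ) : ℚ_[p])‖ ≤ (p : ℝ) ^ (-(k : ℤ)) := by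
      intro u
      have h := PadicInt.appr_spec k u
      rw [← PadicInt.norm_le_pow_iff_mem_span_pow] at h
      have hcoe : ((u - ((u.appr k : ℕ) : ℤ_[p]) : ℤ_[p]) : ℚ_[p])
          = (u : ℚ_[p]) - ((u.appr k : ℕ) : ℚ_[p]) := by push_cast; rfl
      rwa [PadicInt.norm_def, hcoe] at h
    have hza : ‖x - (a : ℚ_[p])‖ ≤ (p : ℝ) ^ (-(k : ℤ)) := happr z
    have hwb : ‖y - (b : ℚ_[p])‖ ≤ (p : ℝ) ^ (-(k : ℤ)) := happr w
    have hlevel : ∀ (u : ℚ_[p]) (c : ℕ), ‖u - 1‖ = (p : ℝ) ^ (-(l : ℤ)) →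
        ‖u - (c : ℚ_[p])‖ ≤ (p : ℝ) ^ (-(k : ℤ)) →
        (p : ℤ) ^ l ∣ (c : ℤ) - 1 ∧ ¬ (p : ℤ) ^ (l + 1) ∣ (c : ℤ) - 1 := by
      intro u c hu hc
      have hnorm : ‖(c : ℚ_[p]) - 1‖ = (p : ℝ) ^ (-(l : ℤ)) := by
        have hsplit : (c : ℚ_[p]) - 1 = ((c : ℚ_[p]) - u) + (u - 1) := by ring
        have hlt : ‖(c : ℚ_[p]) - u‖ < ‖u - 1‖ := by
          rw [norm_sub_rev, hu]
          refine lt_of_le_of_lt hc ?_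
          exact (zpow_lt_zpow_iff_right₀ hp1R).mpr (by omega)
        rw [hsplit, Padic.add_eq_max_of_ne (ne_of_lt hlt), max_eq_right (le_of_lt hlt), hu]
      have hcasteq : (((c : ℤ) - 1 : ℤ) : ℚ_[p]) = (c : ℚ_[p]) - 1 := by push_cast; ring
      constructor
      · have h' : ‖(((c : ℤ) - 1 : ℤ) : ℚ_[p])‖ ≤ (p : ℝ) ^ (-(l : ℤ)) := by
          rw [hcasteq, hnorm]
        have := (Padic.norm_int_le_pow_iff_dvd _ l).mp (by exact_mod_cast h')
        exact_mod_cast this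
      · intro hdvd
        have h' := (Padic.norm_int_le_pow_iff_dvd ((c : ℤ) - 1) (l + 1)).mpr
          (by exact_mod_cast hdvd)
        rw [hcasteq, hnorm] at h'
        have hlt := (zpow_lt_zpow_iff_right₀ hp1R).mpr
          (show -((l + 1 : ℕ) : ℤ) < -(l : ℤ) by push_cast; omega)
        linarith
    obtain ⟨ha1, ha2⟩ := hlevel x a hx hza
    obtain ⟨hb1, hb2⟩ := hlevel y b hy hwb
    have Hgen : ∀ e : ℕ, ¬ p ∣ e → ∃ N, n ^ N ≡ e [MOD p ^ (k - l)] :=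
      fun e he => genAll hpp hp HG (by omega) he
    obtain ⟨N, hNdvd⟩ := core hpp hp hl hkl ha1 ha2 hb1 hb2 Hgen
    refine ⟨N, ?_⟩
    have h1 : ‖x ^ (n ^ N) - ((a : ℚ_[p])) ^ (n ^ N)‖ ≤ (p : ℝ) ^ (-(k : ℤ)) := by
      have hdz : ((p : ℤ_[p])) ^ k ∣ z - ((a : ℕ) : ℤ_[p]) :=
        Ideal.mem_span_singleton.mp (PadicInt.appr_spec k z)
      have hdvd2 : ((p : ℤ_[p])) ^ k ∣ z ^ (n ^ N) - ((a : ℕ) : ℤ_[p]) ^ (n ^ N) :=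
        dvd_trans hdz (sub_dvd_pow_sub_pow _ _ _)
      have hmem := Ideal.mem_span_singleton.mpr hdvd2
      rw [← PadicInt.norm_le_pow_iff_mem_span_pow, PadicInt.norm_def] at hmem
      have hcoe : ((z ^ (n ^ N) - ((a : ℕ) : ℤ_[p]) ^ (n ^ N) : ℤ_[p]) : ℚ_[p])
          = x ^ (n ^ N) - ((a : ℚ_[p])) ^ (n ^ N) := by push_cast; rfl
      rwa [hcoe] at hmem
    have h2 : ‖((a : ℚ_[p])) ^ (n ^ N) - (b : ℚ_[p])‖ ≤ (p : ℝ) ^ (-(k : ℤ)) := by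
      have hcast : (((a : ℤ) ^ (n ^ N) - (b : ℤ) : ℤ) : ℚ_[p])
          = ((a : ℚ_[p])) ^ (n ^ N) - (b : ℚ_[p]) := by push_cast; ring
      rw [← hcast]
      exact (Padic.norm_int_le_pow_iff_dvd _ k).mpr (by exact_mod_cast hNdvd)
    have h3 : ‖(b : ℚ_[p]) - y‖ ≤ (p : ℝ) ^ (-(k : ℤ)) := by
      rw [norm_sub_rev]; exact hwb
    have hsplit : x ^ (n ^ N) - y = (x ^ (n ^ N) - ((a : ℚ_[p])) ^ (n ^ N))
        + ((((a : ℚ_[p])) ^ (n ^ N) - (b : ℚ_[p])) + ((b : ℚ_[p]) - y)) := by ring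
    rw [hsplit]
    refine lt_of_le_of_lt (le_trans (Padic.nonarchimedean _ _)
      (max_le h1 (le_trans (Padic.nonarchimedean _ _) (max_le h2 h3)))) hkε
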